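/- Let T_m be a Hermite pseudo-multiplier satisfying Σ_{ν ∈ ℕ₀ⁿ} (∫ |m(x,ν)|² φ_ν(x)² dx)^{1/2} < ∞. Then T_m is trace class and its trace equals Σ_{ν ∈ ℕ₀ⁿ} ∫_{ℝⁿ} m(x,ν) φ_ν(x)² dx. -/

import Mathlib

open MeasureTheory Filter
open scoped BigOperators ENNReal

noncomputable section

/-- Physicists' Hermite polynomials: `H₀ = 1`, `H_{k+1} = 2 X H_k - H_k'`. -/
def physHermite : ℕ → Polynomial ℝ
  | 0 => 1
  | k + 1 => 2 * Polynomial.X * physHermite k - Polynomial.derivative (physHermite k)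

/-- One-dimensional normalized Hermite functions. -/
def hermiteFun (k : ℕ) (x : ℝ) : ℝ :=
  ((2 : ℝ) ^ k * (Nat.factorial k : ℝ) * Real.sqrt Real.pi) ^ (-(1 : ℝ) / 2) *
    (physHermite k).eval x * Real.exp (-x ^ 2 / 2)

/-- Product of one-dimensional Hermite functions for a multi-index, plain pi-type version. -/
def hermiteProd (n : ℕ) (ν : Fin n → ℕ) (x : Fin n → ℝ) : ℝ :=
  ∏ j, hermiteFun (ν j) (x j)

/-- `n`-dimensional Hermite function `φ_ν` on `ℝⁿ`. -/
def hermiteFunN (n : ℕ) (ν : Fin n → ℕ) (x : EuclideanSpace ℝ (Fin n)) : ℝ :=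
  ∏ j, hermiteFun (ν j) (x j)

/-- `L²(ℝⁿ)` with complex scalars. -/
abbrev L2Rn (n : ℕ) :=
  MeasureTheory.Lp ℂ 2 (volume : Measure (EuclideanSpace ℝ (Fin n)))

/-- `k`-th singular value (approximation number) of an operator on a Hilbert space:
the distance of `T` to operators of rank at most `k`. -/
def singularValue {H : Type*} [NormedAddCommGroup H] [InnerProductSpace ℂ H]
    (T : H →L[ℂ] H) (k : ℕ) : ℝ :=
  sInf {c : ℝ | ∃ F : H →L[ℂ] H,
    (∃ v : Fin k → H, LinearMap.range (F : H →ₗ[ℂ] H) ≤ Submodule.span ℂ (Set.range v)) ∧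
      c = ‖T - F‖}

/-- Schatten–von Neumann class of order `r`: the singular values are `r`-summable. -/
def MemSchatten {H : Type*} [NormedAddCommGroup H] [InnerProductSpace ℂ H]
    (r : ℝ) (T : H →L[ℂ] H) : Prop :=
  Summable fun k => singularValue T k ^ r

/-- Hilbert–Schmidt operators: `∑ ‖T e_ν‖² < ∞` for every orthonormal basis. -/
def IsHilbertSchmidt {H : Type*} [NormedAddCommGroup H] [InnerProductSpace ℂ H]
    (T : H →L[ℂ] H) : Prop :=
  ∀ (ι : Type) (b : HilbertBasis ι ℂ H), Summable fun i => ‖T (b i)‖ ^ 2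

end


section AuxTrace

variable {H : Type*} [NormedAddCommGroup H] [InnerProductSpace ℂ H]

local notation "⟪" x ", " y "⟫" => @inner ℂ _ _ x y

private lemma aux_sv_set_nonempty (T : H →L[ℂ] H) (k : ℕ) :
    {c : ℝ | ∃ F : H →L[ℂ] H,
    (∃ v : Fin k → H, LinearMap.range (F : H →ₗ[ℂ] H) ≤ Submodule.span ℂ (Set.range v)) ∧
      c = ‖T - F‖}.Nonempty :=
  ⟨‖T - 0‖, 0, ⟨fun _ => 0, by simp⟩, rfl⟩

private lemma aux_sv_set_bdd (T : H →L[ℂ] H) (k : ℕ) :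
    BddBelow {c : ℝ | ∃ F : H →L[ℂ] H,
    (∃ v : Fin k → H, LinearMap.range (F : H →ₗ[ℂ] H) ≤ Submodule.span ℂ (Set.range v)) ∧
      c = ‖T - F‖} := by
  refine ⟨0, fun c hc => ?_⟩
  obtain ⟨F, -, rfl⟩ := hc
  exact norm_nonneg _

private lemma aux_sv_nonneg (T : H →L[ℂ] H) (k : ℕ) : 0 ≤ singularValue T k :=
  le_csInf (aux_sv_set_nonempty T k)
    (fun c hc => by obtain ⟨F, -, rfl⟩ := hc; exact norm_nonneg _)

private lemma aux_sv_le (T : H →L[ℂ] H) {k : ℕ} (F : H →L[ℂ] H) (v : Fin k → H)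
    (hF : LinearMap.range (F : H →ₗ[ℂ] H) ≤ Submodule.span ℂ (Set.range v)) :
    singularValue T k ≤ ‖T - F‖ :=
  csInf_le (aux_sv_set_bdd T k) ⟨F, ⟨v, hF⟩, rfl⟩

private lemma aux_bessel (f : ℕ → H) (hf : ∀ i, f i = 0 ∨ ‖f i‖ = 1)
    (horth : ∀ i j, i ≠ j → ⟪f i, f j⟫ = 0) (x : H) (s : Finset ℕ) :
    ∑ i ∈ s, ‖⟪f i, x⟫‖ ^ 2 ≤ ‖x‖ ^ 2 := by
  classical
  have h1 : ∑ i ∈ s, ‖⟪f i, x⟫‖ ^ 2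
      = ∑ i ∈ s.filter (fun i => f i ≠ 0), ‖⟪f i, x⟫‖ ^ 2 := by
    rw [Finset.sum_filter_of_ne]
    intro i _ h h0
    exact h (by simp [h0])
  rw [h1]
  have hv : Orthonormal ℂ (fun i : {i : ℕ // i ∈ s.filter (fun i => f i ≠ 0)} => f i.val) := by
    constructor
    · intro i
      rcases hf i.val with h | h
      · exact absurd h (Finset.mem_filter.mp i.prop).2
      · exact h
    · intro i j hij
      exact horth i.val j.val (fun h => hij (Subtype.ext h))
  calc ∑ i ∈ s.filter (fun i => f i ≠ 0), ‖⟪f i, x⟫‖ ^ 2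
      = ∑ i ∈ (s.filter (fun i => f i ≠ 0)).attach, ‖⟪f i.val, x⟫‖ ^ 2 :=
        (Finset.sum_attach _ _).symm
    _ ≤ ‖x‖ ^ 2 := hv.sum_inner_products_le x

variable [CompleteSpace H]

set_option linter.unusedSectionVars false

private lemma aux_nuclear_bound {ι : Type*} (e : HilbertBasis ι ℂ H) (T : H →L[ℂ] H)
    (hc : Summable fun ν => ‖T (e ν)‖)
    (f h : ℕ → H) (hf : ∀ i, f i = 0 ∨ ‖f i‖ = 1) (hh : ∀ i, h i = 0 ∨ ‖h i‖ = 1)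
    (horthf : ∀ i j, i ≠ j → ⟪f i, f j⟫ = 0) (horthh : ∀ i j, i ≠ j → ⟪h i, h j⟫ = 0)
    (s : Finset ℕ) :
    ∑ k ∈ s, ‖⟪h k, T (f k)⟫‖ ≤ ∑' ν, ‖T (e ν)‖ := by
  classical
  set u : ℕ → ι → ℝ := fun k ν => ‖e.repr (f k) ν‖ * ‖⟪h k, T (e ν)⟫‖ with hu
  have hf1 : ∀ k, ‖f k‖ ≤ 1 := by
    intro k; rcases hf k with h0 | h1
    · simp [h0]
    · simp [h1]
  have hh1 : ∀ k, ‖h k‖ ≤ 1 := by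
    intro k; rcases hh k with h0 | h1
    · simp [h0]
    · simp [h1]
  have hub : ∀ k ν, u k ν ≤ ‖T (e ν)‖ := by
    intro k ν
    have h1 : ‖e.repr (f k) ν‖ ≤ 1 := by
      calc ‖e.repr (f k) ν‖ ≤ ‖e.repr (f k)‖ := lp.norm_apply_le_norm (by norm_num) _ _
        _ = ‖f k‖ := by rw [e.repr.norm_map]
        _ ≤ 1 := hf1 k
    have h2 : ‖⟪h k, T (e ν)⟫‖ ≤ ‖T (e ν)‖ := by
      calc ‖⟪h k, T (e ν)⟫‖ ≤ ‖h k‖ * ‖T (e ν)‖ := norm_inner_le_norm _ _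
        _ ≤ 1 * ‖T (e ν)‖ := mul_le_mul_of_nonneg_right (hh1 k) (norm_nonneg _)
        _ = ‖T (e ν)‖ := one_mul _
    calc u k ν ≤ 1 * ‖⟪h k, T (e ν)⟫‖ :=
          mul_le_mul_of_nonneg_right h1 (norm_nonneg _)
      _ = ‖⟪h k, T (e ν)⟫‖ := one_mul _
      _ ≤ ‖T (e ν)‖ := h2
  have hunn : ∀ k ν, 0 ≤ u k ν := fun k ν =>
    mul_nonneg (norm_nonneg _) (norm_nonneg _)
  have husum : ∀ k, Summable (u k) := fun k =>
    Summable.of_nonneg_of_le (hunn k) (hub k) hc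
  have hstep1 : ∀ k, ‖⟪h k, T (f k)⟫‖ ≤ ∑' ν, u k ν := by
    intro k
    have H1 : HasSum (fun ν => e.repr (f k) ν • T (e ν)) (T (f k)) := by
      have := (e.hasSum_repr (f k)).mapL T
      simpa using this
    have H2 : HasSum (fun ν => e.repr (f k) ν * ⟪h k, T (e ν)⟫) ⟪h k, T (f k)⟫ := by
      have := H1.mapL (innerSL ℂ (h k))
      simpa [inner_smul_right, mul_comm] using this
    rw [← H2.tsum_eq]
    have : Summable fun ν => ‖e.repr (f k) ν * ⟪h k, T (e ν)⟫‖ := by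
      simpa [hu, norm_mul] using husum k
    calc ‖∑' ν, e.repr (f k) ν * ⟪h k, T (e ν)⟫‖
        ≤ ∑' ν, ‖e.repr (f k) ν * ⟪h k, T (e ν)⟫‖ := norm_tsum_le_tsum_norm this
      _ = ∑' ν, u k ν := by simp [hu, norm_mul]
  have hstep2 : ∀ ν, ∑ k ∈ s, u k ν ≤ ‖T (e ν)‖ := by
    intro ν
    have hcs := Finset.sum_mul_sq_le_sq_mul_sq s (fun k => ‖e.repr (f k) ν‖)
      (fun k => ‖⟪h k, T (e ν)⟫‖)
    have hb1 : ∑ k ∈ s, ‖e.repr (f k) ν‖ ^ 2 ≤ 1 := by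
      have hre : ∀ k, ‖e.repr (f k) ν‖ = ‖⟪f k, e ν⟫‖ := by
        intro k; rw [e.repr_apply_apply, norm_inner_symm]
      calc ∑ k ∈ s, ‖e.repr (f k) ν‖ ^ 2 = ∑ k ∈ s, ‖⟪f k, e ν⟫‖ ^ 2 := by
            simp_rw [hre]
        _ ≤ ‖(e ν : H)‖ ^ 2 := aux_bessel f hf horthf (e ν) s
        _ = 1 := by rw [e.orthonormal.1 ν]; norm_num
    have hb2 : ∑ k ∈ s, ‖⟪h k, T (e ν)⟫‖ ^ 2 ≤ ‖T (e ν)‖ ^ 2 :=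
      aux_bessel h hh horthh (T (e ν)) s
    have hsq : (∑ k ∈ s, u k ν) ^ 2 ≤ ‖T (e ν)‖ ^ 2 := by
      calc (∑ k ∈ s, u k ν) ^ 2
          ≤ (∑ k ∈ s, ‖e.repr (f k) ν‖ ^ 2) * (∑ k ∈ s, ‖⟪h k, T (e ν)⟫‖ ^ 2) := hcs
        _ ≤ 1 * ‖T (e ν)‖ ^ 2 := by
            apply mul_le_mul hb1 hb2 (Finset.sum_nonneg fun k _ => sq_nonneg _) one_pos.le
        _ = ‖T (e ν)‖ ^ 2 := one_mul _
    have h0 : 0 ≤ ∑ k ∈ s, u k ν := Finset.sum_nonneg fun k _ => hunn k ν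
    have := Real.sqrt_le_sqrt hsq
    rwa [Real.sqrt_sq h0, Real.sqrt_sq (norm_nonneg _)] at this
  calc ∑ k ∈ s, ‖⟪h k, T (f k)⟫‖ ≤ ∑ k ∈ s, ∑' ν, u k ν :=
        Finset.sum_le_sum (fun k _ => hstep1 k)
    _ = ∑' ν, ∑ k ∈ s, u k ν := (Summable.tsum_finsetSum (fun k _ => husum k)).symm
    _ ≤ ∑' ν, ‖T (e ν)‖ := by
        apply Summable.tsum_le_tsum hstep2 _ hc
        exact summable_sum (fun k _ => husum k)

private lemma aux_greedy (T : H →L[ℂ] H) {ε : ℝ} (hε : 0 < ε) (N : ℕ) :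
    ∃ f h : ℕ → H,
      (∀ i, f i = 0 ∨ ‖f i‖ = 1) ∧
      (∀ i, h i = 0 ∨ ‖h i‖ = 1) ∧
      (∀ i j, i < j → ⟪f i, f j⟫ = 0) ∧
      (∀ i, h i ∈ Submodule.span ℂ (⇑T '' (f '' Set.Iio (i + 1)))) ∧
      (∀ i, ∀ x ∈ Submodule.span ℂ (⇑T '' (f '' Set.Iio i)), ⟪h i, x⟫ = 0) ∧
      (∀ i, N ≤ i → f i = 0) ∧ (∀ i, N ≤ i → h i = 0) ∧
      (∀ k, k < N → singularValue T k - ε ≤ ‖⟪h k, T (f k)⟫‖) := by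
  classical
  induction N with
  | zero =>
      refine ⟨fun _ => 0, fun _ => 0, fun _ => Or.inl rfl, fun _ => Or.inl rfl,
        fun i j _ => inner_zero_left _, fun i => Submodule.zero_mem _,
        fun i x _ => inner_zero_left _, fun _ _ => rfl, fun _ _ => rfl, fun k hk => by omega⟩
  | succ N ih =>
      obtain ⟨f, h, hf1, hh1, hforth, hhmem, hhorth, hfz, hhz, hval⟩ := ih
      set sU : Set H := f '' Set.Iio N with hsU_def
      have hsUfin : sU.Finite := (Set.finite_Iio N).image f
      set U : Submodule ℂ H := Submodule.span ℂ sU with hU_def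
      set sV : Set H := ⇑T '' sU with hsV_def
      have hsVfin : sV.Finite := hsUfin.image _
      set V : Submodule ℂ H := Submodule.span ℂ sV with hV_def
      haveI : FiniteDimensional ℂ U := FiniteDimensional.span_of_finite ℂ hsUfin
      haveI : FiniteDimensional ℂ V := FiniteDimensional.span_of_finite ℂ hsVfin
      set PU : H →L[ℂ] H := U.subtypeL ∘L U.orthogonalProjectionOnto with hPU_def
      set PV : H →L[ℂ] H := V.subtypeL ∘L V.orthogonalProjectionOnto with hPV_def
      set g : H →L[ℂ] H := T - PV ∘L T with hg_def
      -- main existence claim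
      have hex : ∃ u : H, (u = 0 ∨ ‖u‖ = 1) ∧ u ∈ Uᗮ ∧
          singularValue T N - ε ≤ ‖g u‖ := by
        by_cases hs : singularValue T N ≤ ε
        · exact ⟨0, Or.inl rfl, Submodule.zero_mem _, by simp; linarith⟩
        · by_contra hcon
          push_neg at hcon
          have ht : 0 < singularValue T N - ε := by linarith [not_le.mp hs]
          set F : H →L[ℂ] H := T ∘L PU + PV ∘L (T ∘L (ContinuousLinearMap.id ℂ H - PU))
            with hF_def
          have hrangeset : Set.range (fun j : Fin N => T (f j.val)) = sV := by
            ext y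
            constructor
            · rintro ⟨j, rfl⟩
              exact ⟨f j.val, ⟨j.val, j.isLt, rfl⟩, rfl⟩
            · rintro ⟨x, ⟨i, hi, rfl⟩, rfl⟩
              exact ⟨⟨i, hi⟩, rfl⟩
          have hrange : LinearMap.range (F : H →ₗ[ℂ] H) ≤
              Submodule.span ℂ (Set.range (fun j : Fin N => T (f j.val))) := by
            rw [hrangeset]
            rintro x ⟨y, rfl⟩
            have h1 : (F y : H) = T (PU y) + PV (T (y - PU y)) := by
              simp [hF_def]
            rw [show ((F : H →ₗ[ℂ] H) y : H) = F y from rfl, h1]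
            apply Submodule.add_mem
            · have hPUy : PU y ∈ U := by
                simp only [hPU_def]
                exact (U.orthogonalProjectionOnto y).2
              have := Submodule.apply_mem_span_image_of_mem_span (T : H →ₗ[ℂ] H) hPUy
              simpa [hV_def, hsV_def] using this
            · have : PV (T (y - PU y)) ∈ V := by
                simp only [hPV_def]
                exact (V.orthogonalProjectionOnto _).2
              simpa [hV_def] using this
          have hbound : ‖T - F‖ ≤ singularValue T N - ε := by
            apply ContinuousLinearMap.opNorm_le_bound _ ht.le
            intro x
            have hTF : (T - F) x = g (x - PU x) := by
              simp only [hg_def, hF_def, ContinuousLinearMap.sub_apply,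
                ContinuousLinearMap.add_apply, ContinuousLinearMap.comp_apply,
                ContinuousLinearMap.id_apply, map_sub]
              abel
            set r : H := x - PU x with hr_def
            have hrU : r ∈ Uᗮ := Submodule.sub_starProjection_mem_orthogonal (K := U) x
            have hrx : ‖r‖ ≤ ‖x‖ := by
              have hinner : ⟪(PU x : H), r⟫ = 0 := by
                exact (Submodule.mem_orthogonal U r).mp hrU (PU x)
                  (by simp only [hPU_def]; exact (U.orthogonalProjectionOnto x).2)
              have hxeq : x = PU x + r := by rw [hr_def]; abel
              have h3 := @norm_add_sq ℂ _ _ _ _ (PU x) r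
              rw [hinner] at h3
              simp only [map_zero, mul_zero, add_zero] at h3
              have hsq : ‖x‖ ^ 2 = ‖(PU x : H)‖ ^ 2 + ‖r‖ ^ 2 := by
                nth_rewrite 1 [hxeq]; simpa using h3
              nlinarith [norm_nonneg r, norm_nonneg x, norm_nonneg (PU x)]
            rw [hTF]
            by_cases hr0 : r = 0
            · rw [hr0]
              simp only [map_zero, norm_zero]
              positivity
            · set u : H := ((‖r‖⁻¹ : ℝ) : ℂ) • r with hu_def
              have hnu : ‖u‖ = 1 := by
                rw [hu_def, norm_smul]
                simp [norm_ne_zero_iff.mpr hr0, inv_mul_cancel₀]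
              have huU : u ∈ Uᗮ := Submodule.smul_mem _ _ hrU
              have hlt : ‖g u‖ < singularValue T N - ε := hcon u (Or.inr hnu) huU
              have hru : r = ((‖r‖ : ℝ) : ℂ) • u := by
                rw [hu_def, smul_smul]
                rw [← Complex.ofReal_mul, mul_inv_cancel₀ (norm_ne_zero_iff.mpr hr0)]
                simp
              calc ‖g r‖ = ‖((‖r‖ : ℝ) : ℂ) • g u‖ := by
                    conv_lhs => rw [hru]
                    rw [g.map_smul]
                _ = ‖r‖ * ‖g u‖ := by
                    rw [norm_smul]; simp
                _ ≤ ‖r‖ * (singularValue T N - ε) := by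
                    exact mul_le_mul_of_nonneg_left hlt.le (norm_nonneg r)
                _ ≤ ‖x‖ * (singularValue T N - ε) := by
                    exact mul_le_mul_of_nonneg_right hrx ht.le
                _ = (singularValue T N - ε) * ‖x‖ := mul_comm _ _
          have := aux_sv_le T F (fun j : Fin N => T (f j.val)) hrange
          linarith
      obtain ⟨u, hu01, huU, huval⟩ := hex
      set w : H := g u with hw_def
      have hwV : w ∈ Vᗮ := by
        have := Submodule.sub_starProjection_mem_orthogonal (K := V) (T u)
        simpa [hw_def, hg_def, hPV_def] using this
      set h' : H := if w = 0 then 0 else ((‖w‖⁻¹ : ℝ) : ℂ) • w with hh'_def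
      have hh'V : h' ∈ Vᗮ := by
        rw [hh'_def]
        split
        · exact Submodule.zero_mem _
        · exact Submodule.smul_mem _ _ hwV
      set f' : ℕ → H := Function.update f N u with hf'_def
      set h'' : ℕ → H := Function.update h N h' with hh''_def
      have hf'lt : ∀ i, i ≠ N → f' i = f i := fun i hi => Function.update_of_ne hi _ _
      have hh''lt : ∀ i, i ≠ N → h'' i = h i := fun i hi => Function.update_of_ne hi _ _
      have himg : ∀ M : ℕ, M ≤ N → f' '' Set.Iio M = f '' Set.Iio M := by
        intro M hM
        apply Set.image_congr
        intro i hi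
        exact hf'lt i (by simp only [Set.mem_Iio] at hi; omega)
      refine ⟨f', h'', ?_, ?_, ?_, ?_, ?_, ?_, ?_, ?_⟩
      · intro i
        by_cases hi : i = N
        · rw [hi, hf'_def]; simpa using hu01
        · rw [hf'lt i hi]; exact hf1 i
      · intro i
        by_cases hi : i = N
        · rw [hi, hh''_def]
          simp only [Function.update_self]
          rw [hh'_def]
          split
          · exact Or.inl rfl
          · right
            rw [norm_smul]
            simp_all [norm_ne_zero_iff, inv_mul_cancel₀]
        · rw [hh''lt i hi]; exact hh1 i
      · intro i j hij
        rcases lt_trichotomy j N with hj | hj | hj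
        · rw [hf'lt i (by omega), hf'lt j (by omega)]
          exact hforth i j hij
        · subst hj
          rw [hf'lt i (by omega), hf'_def]
          simp only [Function.update_self]
          exact (Submodule.mem_orthogonal U u).mp huU (f i)
            (Submodule.subset_span ⟨i, hij, rfl⟩)
        · rw [hf'lt j (by omega)]
          rw [hfz j (by omega)]
          exact inner_zero_right _
      · intro i
        rcases lt_trichotomy i N with hi | hi | hi
        · rw [hh''lt i (by omega), himg (i + 1) (by omega)]
          exact hhmem i
        · subst hi
          rw [hh''_def]
          simp only [Function.update_self]
          have hTu : T u ∈ Submodule.span ℂ (⇑T '' (f' '' Set.Iio (i + 1))) := by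
            apply Submodule.subset_span
            exact ⟨f' i, ⟨i, Set.mem_Iio.mpr (Nat.lt_succ_self i), rfl⟩, by rw [hf'_def]; simp⟩
          have hPVTu : PV (T u) ∈ Submodule.span ℂ (⇑T '' (f' '' Set.Iio (i + 1))) := by
            have h1 : PV (T u) ∈ V := by
              simp only [hPV_def]; exact (V.orthogonalProjectionOnto _).2
            have h2 : V ≤ Submodule.span ℂ (⇑T '' (f' '' Set.Iio (i + 1))) := by
              rw [hV_def]
              apply Submodule.span_mono
              rw [hsV_def, hsU_def, ← himg i le_rfl]
              apply Set.image_mono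
              apply Set.image_mono
              intro a ha
              simp only [Set.mem_Iio] at *
              omega
            exact h2 h1
          have hwmem : w ∈ Submodule.span ℂ (⇑T '' (f' '' Set.Iio (i + 1))) := by
            have : w = T u - PV (T u) := by simp [hw_def, hg_def]
            rw [this]
            exact Submodule.sub_mem _ hTu hPVTu
          rw [hh'_def]
          split
          · exact Submodule.zero_mem _
          · exact Submodule.smul_mem _ _ hwmem
        · rw [hh''lt i (by omega), hhz i (by omega)]
          exact Submodule.zero_mem _
      · intro i x hx
        rcases lt_trichotomy i N with hi | hi | hi
        · rw [hh''lt i (by omega)]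
          rw [himg i (by omega)] at hx
          exact hhorth i x hx
        · subst hi
          rw [hh''_def]
          simp only [Function.update_self]
          rw [himg i le_rfl] at hx
          exact (Submodule.mem_orthogonal' V h').mp hh'V x hx
        · rw [hh''lt i (by omega), hhz i (by omega)]
          exact inner_zero_left _
      · intro i hi
        rw [hf'lt i (by omega), hfz i (by omega)]
      · intro i hi
        rw [hh''lt i (by omega), hhz i (by omega)]
      · intro k hk
        rcases lt_trichotomy k N with hki | hki | hki
        · rw [hh''lt k (by omega), hf'lt k (by omega)]
          exact hval k hki
        · subst hki
          rw [hh''_def, hf'_def]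
          simp only [Function.update_self]
          by_cases hw0 : w = 0
          · rw [hh'_def, if_pos hw0]
            rw [inner_zero_left]
            simp only [norm_zero]
            rw [hw0, norm_zero] at huval
            linarith
          · have hTuw : T u = w + PV (T u) := by simp [hw_def, hg_def]
            have hinner2 : ⟪w, PV (T u)⟫ = 0 := by
              apply (Submodule.mem_orthogonal' V w).mp hwV
              simp only [hPV_def]; exact (V.orthogonalProjectionOnto _).2
            have hcalc : ⟪h', T u⟫ = ((‖w‖ : ℝ) : ℂ) := by
              rw [hh'_def, if_neg hw0]
              rw [inner_smul_left]
              rw [hTuw, inner_add_right, hinner2, add_zero]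
              rw [inner_self_eq_norm_sq_to_K]
              rw [Complex.conj_ofReal]
              have hne : ‖w‖ ≠ 0 := norm_ne_zero_iff.mpr hw0
              have hre : ‖w‖⁻¹ * (‖w‖ * ‖w‖) = ‖w‖ := by field_simp
              calc ((‖w‖⁻¹ : ℝ) : ℂ) * ((‖w‖ : ℝ) : ℂ) ^ 2
                  = ((‖w‖⁻¹ * (‖w‖ * ‖w‖) : ℝ) : ℂ) := by push_cast; ring
                _ = ((‖w‖ : ℝ) : ℂ) := by rw [hre]
            rw [hcalc]
            rw [Complex.norm_real]
            rw [Real.norm_eq_abs, abs_of_nonneg (norm_nonneg w)]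
            exact huval
        · omega
  

private lemma aux_schatten_one {ι : Type*} (e : HilbertBasis ι ℂ H) (T : H →L[ℂ] H)
    (hc : Summable fun ν => ‖T (e ν)‖) :
    Summable fun k => singularValue T k ^ (1 : ℝ) := by
  have key : ∀ N : ℕ, ∑ k ∈ Finset.range N, singularValue T k ≤ ∑' ν, ‖T (e ν)‖ := by
    intro N
    have hN : ∀ ε : ℝ, 0 < ε →
        ∑ k ∈ Finset.range N, singularValue T k ≤ (∑' ν, ‖T (e ν)‖) + N * ε := by
      intro ε hε
      obtain ⟨f, h, hf1, hh1, hforth, hhmem, hhorth, hfz, hhz, hval⟩ := aux_greedy T hε N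
      have hforth' : ∀ i j, i ≠ j → ⟪f i, f j⟫ = 0 := by
        intro i j hij
        rcases lt_or_gt_of_ne hij with h' | h'
        · exact hforth i j h'
        · rw [← inner_conj_symm, hforth j i h', map_zero]
      have hmono : ∀ i j : ℕ, i < j →
          Submodule.span ℂ (⇑T '' (f '' Set.Iio (i + 1))) ≤
          Submodule.span ℂ (⇑T '' (f '' Set.Iio j)) := by
        intro i j hij
        exact Submodule.span_mono
          (Set.image_mono (Set.image_mono (Set.Iio_subset_Iio (by omega))))
      have hhorth' : ∀ i j, i ≠ j → ⟪h i, h j⟫ = 0 := by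
        intro i j hij
        rcases lt_or_gt_of_ne hij with h' | h'
        · rw [← inner_conj_symm, hhorth j (h i) (hmono i j h' (hhmem i)), map_zero]
        · exact hhorth i (h j) (hmono j i h' (hhmem j))
      calc ∑ k ∈ Finset.range N, singularValue T k
          ≤ ∑ k ∈ Finset.range N, (‖⟪h k, T (f k)⟫‖ + ε) := by
            apply Finset.sum_le_sum
            intro k hk
            have := hval k (Finset.mem_range.mp hk)
            linarith
        _ = (∑ k ∈ Finset.range N, ‖⟪h k, T (f k)⟫‖) + N * ε := by
            rw [Finset.sum_add_distrib, Finset.sum_const, Finset.card_range, nsmul_eq_mul]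
        _ ≤ (∑' ν, ‖T (e ν)‖) + N * ε := by
            have := aux_nuclear_bound e T hc f h hf1 hh1 hforth' hhorth' (Finset.range N)
            linarith
    by_contra hlt
    push_neg at hlt
    set S := ∑ k ∈ Finset.range N, singularValue T k with hS
    set C := ∑' ν, ‖T (e ν)‖ with hC
    have hpos : 0 < S - C := by linarith
    have := hN ((S - C) / (N + 1)) (by positivity)
    have hNN : (N : ℝ) * ((S - C) / (N + 1)) < S - C := by
      rw [div_eq_inv_mul, ← mul_assoc]
      have h1 : (N : ℝ) * ((N : ℝ) + 1)⁻¹ < 1 := by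
        rw [mul_inv_lt_iff₀ (by positivity)]
        linarith
      nlinarith
    linarith
  have hsum : Summable (fun k => singularValue T k) :=
    summable_of_sum_range_le (fun k => aux_sv_nonneg T k) key
  simpa [Real.rpow_one] using hsum

end AuxTrace

/-- If `∑_ν (∫ |m(x,ν)|² φ_ν(x)² dx)^{1/2} < ∞` then the Hermite
pseudo-multiplier `T_m` is trace class and its trace equals `∑_ν ∫ m(x,ν) φ_ν(x)² dx`. -/
theorem pseudoMultiplier_traceClass_and_trace
    (n : ℕ) (m : EuclideanSpace ℝ (Fin n) → (Fin n → ℕ) → ℂ)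
    (B : HilbertBasis (Fin n → ℕ) ℂ (L2Rn n))
    (hB : ∀ ν, (B ν : EuclideanSpace ℝ (Fin n) → ℂ) =ᵐ[volume]
      fun x => (hermiteFunN n ν x : ℂ))
    (T : L2Rn n →L[ℂ] L2Rn n)
    (hT : ∀ ν, (T (B ν) : EuclideanSpace ℝ (Fin n) → ℂ) =ᵐ[volume]
      fun x => m x ν * (hermiteFunN n ν x : ℂ))
    (hm : Summable fun ν : Fin n → ℕ =>
      (∫ x, ‖m x ν‖ ^ 2 * hermiteFunN n ν x ^ 2) ^ ((1 : ℝ) / 2)) :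
    MemSchatten 1 T ∧
      (∑' ν : Fin n → ℕ, (inner ℂ (B ν) (T (B ν)) : ℂ)) =
        ∑' ν : Fin n → ℕ, ∫ x, m x ν * (hermiteFunN n ν x : ℂ) ^ 2 := by
  have hnorm : ∀ ν, (∫ x, ‖m x ν‖ ^ 2 * hermiteFunN n ν x ^ 2) ^ ((1 : ℝ) / 2)
      = ‖T (B ν)‖ := by
    intro ν
    have hsq : ‖T (B ν)‖ ^ 2
        = ∫ x, ‖(T (B ν) : EuclideanSpace ℝ (Fin n) → ℂ) x‖ ^ 2 := by
      rw [← @inner_self_eq_norm_sq ℂ, MeasureTheory.L2.inner_def,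
        ← integral_re (MeasureTheory.L2.integrable_inner (𝕜 := ℂ) (T (B ν)) (T (B ν)))]
      congr 1
      ext x
      exact inner_self_eq_norm_sq _
    have hint : ∫ x, ‖(T (B ν) : EuclideanSpace ℝ (Fin n) → ℂ) x‖ ^ 2
        = ∫ x, ‖m x ν‖ ^ 2 * hermiteFunN n ν x ^ 2 := by
      apply integral_congr_ae
      filter_upwards [hT ν] with x hx
      rw [hx, norm_mul, mul_pow, Complex.norm_real, Real.norm_eq_abs, sq_abs]
    rw [hint] at hsq
    rw [← hsq, ← Real.rpow_natCast ‖T (B ν)‖ 2, ← Real.rpow_mul (norm_nonneg _)]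
    norm_num
  have hc : Summable fun ν => ‖T (B ν)‖ := by
    have := hm
    simp_rw [hnorm] at this
    exact this
  constructor
  · exact aux_schatten_one B T hc
  · apply tsum_congr
    intro ν
    rw [MeasureTheory.L2.inner_def]
    apply integral_congr_ae
    filter_upwards [hB ν, hT ν] with x hx1 hx2
    rw [hx1, hx2, RCLike.inner_apply, Complex.conj_ofReal]
    ring
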